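/- arXiv:1710.08115 — 3 statements merged into one kernel-verified Lean document; each statement's English description precedes it below -/
import Mathlib

section
/- Let f : ℝⁿ → ℝ be convex and differentiable, hₑ(x) = aₑᵀx + bₑ affine for e = 1,…,l, and gⱼ(x) = cⱼᵀx + dⱼ affine for j = 1,…,m. Define 𝔏(x, μ, λ) = f(x) + Σₑ μₑ hₑ(x) + Σⱼ λⱼ gⱼ(x). Then (x*, μ*, λ*) ∈ ℝⁿ × ℝˡ × ℝ≥0ᵐ is a saddle point of 𝔏 if and only if the KKT conditions hold: ∇f(x*) + Σₑ μₑ* aₑ + Σⱼ λⱼ* cⱼ = 0, hₑ(x*) = 0 for all e, gⱼ(x*) ≤ 0 for all j, λⱼ* ≥ 0 for all j, and λⱼ* gⱼ(x*) = 0 for all j. -/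
open RealInnerProductSpace

private lemma convex_first_order {N : ℕ} {f : EuclideanSpace ℝ (Fin N) → ℝ}
    (hf : ConvexOn ℝ Set.univ f) {x G : EuclideanSpace ℝ (Fin N)}
    (hG : HasGradientAt f G x) (y : EuclideanSpace ℝ (Fin N)) :
    f x + ⟪G, y - x⟫ ≤ f y := by
  set γ : ℝ → EuclideanSpace ℝ (Fin N) := fun t => x + t • (y - x) with hγdef
  set φ : ℝ → ℝ := fun t => f (γ t) with hφ
  have hline : ∀ t : ℝ, (AffineMap.lineMap x y : ℝ →ᵃ[ℝ] EuclideanSpace ℝ (Fin N)) t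
      = γ t := by
    intro t
    simp [AffineMap.lineMap_apply, hγdef]
    abel
  have hconv : ConvexOn ℝ Set.univ φ := by
    have h2 := hf.comp_affineMap (AffineMap.lineMap x y : ℝ →ᵃ[ℝ] EuclideanSpace ℝ (Fin N))
    have heq : (f ∘ (AffineMap.lineMap x y : ℝ →ᵃ[ℝ] EuclideanSpace ℝ (Fin N))) = φ :=
      funext fun t => by simp [Function.comp, hline t, hφ]
    rw [heq] at h2
    simpa using h2
  have hγ : HasDerivAt γ (y - x) 0 := by
    have := ((hasDerivAt_id (0:ℝ)).smul_const (y - x)).const_add x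
    rw [one_smul] at this
    exact this
  have hfd : HasFDerivAt f (InnerProductSpace.toDual ℝ _ G) (γ 0) := by
    have : γ 0 = x := by simp [hγdef]
    rw [this]
    exact hG.hasFDerivAt
  have hder : HasDerivAt φ ⟪G, y - x⟫ 0 := by
    have h3 := hfd.comp_hasDerivAt 0 hγ
    exact h3
  have h4 := hconv.le_slope_of_hasDerivAt (Set.mem_univ (0:ℝ)) (Set.mem_univ 1) one_pos hder
  have hs : slope φ 0 1 = f y - f x := by
    rw [slope_def_field]
    simp [hφ, hγdef]
  rw [hs] at h4
  linarith

private lemma min_grad_zero {N : ℕ} {F : EuclideanSpace ℝ (Fin N) → ℝ}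
    {G x : EuclideanSpace ℝ (Fin N)} (hG : HasGradientAt F G x)
    (hmin : ∀ y, F x ≤ F y) : G = 0 := by
  have h1 : IsLocalMin F x := Filter.Eventually.of_forall hmin
  have h2 := h1.hasFDerivAt_eq_zero hG.hasFDerivAt
  exact (InnerProductSpace.toDual ℝ (EuclideanSpace ℝ (Fin N))).map_eq_zero_iff.mp h2

theorem saddle_point_iff_KKT (n l m : ℕ)
    (f : EuclideanSpace ℝ (Fin n) → ℝ)
    (gradf : EuclideanSpace ℝ (Fin n) → EuclideanSpace ℝ (Fin n))
    (hf : ConvexOn ℝ Set.univ f)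
    (hdiff : Differentiable ℝ f)
    (hgrad : ∀ x, HasGradientAt f (gradf x) x)
    (a : Fin l → EuclideanSpace ℝ (Fin n)) (b : Fin l → ℝ)
    (c : Fin m → EuclideanSpace ℝ (Fin n)) (d : Fin m → ℝ)
    (h : Fin l → EuclideanSpace ℝ (Fin n) → ℝ)
    (g : Fin m → EuclideanSpace ℝ (Fin n) → ℝ)
    (hh : ∀ e x, h e x = ⟪a e, x⟫ + b e)
    (hg : ∀ j x, g j x = ⟪c j, x⟫ + d j)
    (La : (EuclideanSpace ℝ (Fin n)) → (Fin l → ℝ) → (Fin m → ℝ) → ℝ)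
    (hLa : ∀ x μ lam, La x μ lam =
      f x + (∑ e, μ e * h e x) + (∑ j, lam j * g j x))
    (xs : EuclideanSpace ℝ (Fin n)) (μs : Fin l → ℝ) (lams : Fin m → ℝ)
    (hlams : ∀ j, 0 ≤ lams j) :
    (∀ (x : EuclideanSpace ℝ (Fin n)) (μ : Fin l → ℝ) (lam : Fin m → ℝ),
        (∀ j, 0 ≤ lam j) → La xs μ lam ≤ La xs μs lams ∧ La xs μs lams ≤ La x μs lams)
    ↔
    (gradf xs + (∑ e, μs e • a e) + (∑ j, lams j • c j) = 0 ∧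
      (∀ e, h e xs = 0) ∧ (∀ j, g j xs ≤ 0) ∧ (∀ j, 0 ≤ lams j) ∧
      (∀ j, lams j * g j xs = 0)) := by
  set v : EuclideanSpace ℝ (Fin n) := (∑ e, μs e • a e) + ∑ j, lams j • c j with hv
  set C : ℝ := (∑ e, μs e * b e) + ∑ j, lams j * d j with hC
  have hLaF : ∀ x, La x μs lams = f x + ⟪v, x⟫ + C := by
    intro x
    rw [hLa]
    simp only [hv, hC, inner_add_left, sum_inner, real_inner_smul_left]
    simp only [hh, hg, mul_add, Finset.sum_add_distrib]
    ring
  have hFgrad : HasGradientAt (fun y => f y + ⟪v, y⟫) (gradf xs + v) xs := by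
    rw [hasGradientAt_iff_hasFDerivAt]
    have h1 : HasFDerivAt f (InnerProductSpace.toDual ℝ _ (gradf xs)) xs :=
      (hgrad xs).hasFDerivAt
    have h2 : HasFDerivAt (fun y : EuclideanSpace ℝ (Fin n) => ⟪v, y⟫)
        (InnerProductSpace.toDual ℝ _ v) xs := by
      have := (InnerProductSpace.toDual ℝ (EuclideanSpace ℝ (Fin n)) v).hasFDerivAt (x := xs)
      exact this
    have h3 := h1.add h2
    rw [map_add]; exact h3
  constructor
  · intro H
    have hH1 : ∀ μ lam, (∀ j, 0 ≤ lam j) → La xs μ lam ≤ La xs μs lams :=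
      fun μ lam hl => (H xs μ lam hl).1
    have hH2 : ∀ x, La xs μs lams ≤ La x μs lams := fun x => (H x μs lams hlams).2
    -- h e xs = 0
    have hhe : ∀ e, h e xs = 0 := by
      have h1 := hH1 (fun e => μs e + h e xs) lams hlams
      rw [hLa, hLa] at h1
      have h2 : ∑ e, (h e xs) ^ 2 ≤ 0 := by
        have : ∑ e, (μs e + h e xs) * h e xs = (∑ e, μs e * h e xs) + ∑ e, (h e xs) ^ 2 := by
          rw [← Finset.sum_add_distrib]; congr 1; funext e; ring
        rw [this] at h1
        linarith
      intro e
      have := (Finset.sum_eq_zero_iff_of_nonneg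
        (fun i _ => sq_nonneg (h i xs))).mp
        (le_antisymm h2 (Finset.sum_nonneg fun i _ => sq_nonneg (h i xs))) e (Finset.mem_univ e)
      exact pow_eq_zero_iff (by norm_num) |>.mp this
    -- g j xs ≤ 0
    have hgle : ∀ j, g j xs ≤ 0 := by
      intro j0
      have h1 := hH1 μs (fun j => lams j + if j = j0 then 1 else 0)
        (fun j => add_nonneg (hlams j) (by split <;> norm_num))
      rw [hLa, hLa] at h1
      have : ∑ j, (lams j + if j = j0 then 1 else 0) * g j xs
          = (∑ j, lams j * g j xs) + g j0 xs := by
        rw [show (∑ j, (lams j + if j = j0 then 1 else 0) * g j xs)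
            = ∑ j, (lams j * g j xs + if j = j0 then g j xs else 0) from
          Finset.sum_congr rfl fun j _ => by split <;> simp_all <;> ring]
        rw [Finset.sum_add_distrib, Finset.sum_ite_eq' Finset.univ j0 (fun j => g j xs)]
        simp
      rw [this] at h1
      linarith
    -- complementary slackness
    have hcomp : ∀ j, lams j * g j xs = 0 := by
      have h1 := hH1 μs (fun _ => 0) (fun _ => le_refl 0)
      rw [hLa, hLa] at h1
      simp only [zero_mul, Finset.sum_const_zero] at h1
      have hsum : 0 ≤ ∑ j, lams j * g j xs := by linarith
      have hnp : ∀ j ∈ Finset.univ, lams j * g j xs ≤ 0 :=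
        fun j _ => mul_nonpos_of_nonneg_of_nonpos (hlams j) (hgle j)
      have hz : ∑ j, lams j * g j xs = 0 :=
        le_antisymm (Finset.sum_nonpos hnp) hsum
      intro j
      have := (Finset.sum_eq_zero_iff_of_nonpos hnp).mp hz j (Finset.mem_univ j)
      exact this
    refine ⟨?_, hhe, hgle, hlams, hcomp⟩
    · have hmin : ∀ y, (fun y => f y + ⟪v, y⟫) xs ≤ (fun y => f y + ⟪v, y⟫) y := by
        intro y
        have h5 := hH2 y
        rw [hLaF xs, hLaF y] at h5
        show f xs + ⟪v, xs⟫ ≤ f y + ⟪v, y⟫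
        linarith
      have := min_grad_zero hFgrad hmin
      rw [hv, ← add_assoc] at this
      exact this
  · rintro ⟨hgrad0, hhe, hgle, _, hcomp⟩
    intro x μ lam hlam
    constructor
    · rw [hLa, hLa]
      have e1 : ∑ e, μ e * h e xs = 0 :=
        Finset.sum_eq_zero fun e _ => by rw [hhe e, mul_zero]
      have e2 : ∑ e, μs e * h e xs = 0 :=
        Finset.sum_eq_zero fun e _ => by rw [hhe e, mul_zero]
      have e3 : ∑ j, lams j * g j xs = 0 :=
        Finset.sum_eq_zero fun j _ => hcomp j
      have e4 : ∑ j, lam j * g j xs ≤ 0 :=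
        Finset.sum_nonpos fun j _ => mul_nonpos_of_nonneg_of_nonpos (hlam j) (hgle j)
      linarith
    · rw [hLaF xs, hLaF x]
      have hfo := convex_first_order hf (hgrad xs) x
      have hgv : gradf xs = -v := by
        apply eq_neg_of_add_eq_zero_left
        rw [hv, ← add_assoc]
        exact hgrad0
      rw [hgv] at hfo
      simp only [inner_neg_left, inner_sub_right] at hfo
      have : (⟪v, x⟫ : ℝ) - ⟪v, xs⟫ = ⟪v, x - xs⟫ := (inner_sub_right v x xs).symm
      push_cast at hfo
      linarith [hfo]
end

section
/- Let L ∈ ℝⁿˣⁿ be the Laplacian of an undirected connected graph and let U₁ ∈ ℝⁿˣ⁽ⁿ⁻¹⁾ have orthonormal columns all orthogonal to 𝟙ₙ. Then the block matrix A = [[-(I + L), -L U₁], [U₁ᵀ L, 0]] ∈ ℝ⁽²ⁿ⁻¹⁾ˣ⁽²ⁿ⁻¹⁾ is Hurwitz, i.e., every eigenvalue of A has strictly negative real part. -/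
open Matrix

private lemma exists_eigvec {m : Type*} [Fintype m] [DecidableEq m]
    (M : Matrix m m ℂ) {μ : ℂ} (h : μ ∈ spectrum ℂ M) :
    ∃ v : m → ℂ, v ≠ 0 ∧ M *ᵥ v = μ • v := by
  rw [spectrum.mem_iff, Matrix.isUnit_iff_isUnit_det, isUnit_iff_ne_zero, not_not] at h
  obtain ⟨v, hv0, hv⟩ := (Matrix.exists_mulVec_eq_zero_iff).mpr h
  refine ⟨v, hv0, ?_⟩
  rw [Matrix.sub_mulVec] at hv
  have halg : (algebraMap ℂ (Matrix m m ℂ) μ) *ᵥ v = μ • v := by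
    rw [Algebra.algebraMap_eq_smul_one, Matrix.smul_mulVec, Matrix.one_mulVec]
  rw [halg, sub_eq_zero] at hv
  exact hv.symm

private lemma star_dot_mulVec {m k : Type*} [Fintype m] [Fintype k]
    (M : Matrix m k ℂ) (u : m → ℂ) (w : k → ℂ) :
    star u ⬝ᵥ (M *ᵥ w) = star (star w ⬝ᵥ (Mᴴ *ᵥ u)) := by
  simp only [dotProduct, mulVec, Pi.star_apply, star_sum, star_mul', star_star,
    conjTranspose_apply, Finset.mul_sum]
  rw [Finset.sum_comm]
  exact Finset.sum_congr rfl fun i _ => Finset.sum_congr rfl fun j _ => by ring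

private lemma dot_self_eq (m : Type*) [Fintype m] (z : m → ℂ) :
    star z ⬝ᵥ z = ((∑ i, Complex.normSq (z i) : ℝ) : ℂ) := by
  simp only [dotProduct, Pi.star_apply, Complex.ofReal_sum]
  exact Finset.sum_congr rfl fun i _ => by
    rw [Complex.star_def, ← Complex.normSq_eq_conj_mul_self]

private lemma sum_normSq_nonneg {m : Type*} [Fintype m] (z : m → ℂ) :
    0 ≤ ∑ i, Complex.normSq (z i) :=
  Finset.sum_nonneg fun i _ => Complex.normSq_nonneg _

private lemma sum_normSq_eq_zero {m : Type*} [Fintype m] {z : m → ℂ}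
    (h : ∑ i, Complex.normSq (z i) = 0) : z = 0 := by
  funext i
  have := (Finset.sum_eq_zero_iff_of_nonneg
    (fun i _ => Complex.normSq_nonneg (z i))).mp h i (Finset.mem_univ i)
  simpa using Complex.normSq_eq_zero.mp this

theorem block_matrix_hurwitz (n : ℕ)
    (G : SimpleGraph (Fin n)) [DecidableRel G.Adj]
    (hconn : G.Connected)
    (L : Matrix (Fin n) (Fin n) ℝ) (hL : L = G.lapMatrix ℝ)
    (U₁ : Matrix (Fin n) (Fin (n - 1)) ℝ)
    (horth : U₁ᵀ * U₁ = 1)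
    (hperp : U₁ᵀ.mulVec (fun _ => (1 : ℝ)) = 0)
    (A : Matrix (Fin n ⊕ Fin (n - 1)) (Fin n ⊕ Fin (n - 1)) ℝ)
    (hA : A = Matrix.fromBlocks (-(1 + L)) (-(L * U₁)) (U₁ᵀ * L) 0) :
    ∀ μ ∈ spectrum ℂ (A.map (algebraMap ℝ ℂ)), μ.re < 0 := by
  intro μ hμ
  set f : ℝ →+* ℂ := (algebraMap ℝ ℂ : ℝ →+* ℂ) with hf
  set Lc : Matrix (Fin n) (Fin n) ℂ := L.map f with hLc
  set Uc : Matrix (Fin n) (Fin (n - 1)) ℂ := U₁.map f with hUc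
  -- L is symmetric
  have hLsymm : Lᵀ = L := by rw [hL]; exact G.isSymm_lapMatrix ℝ
  have hLsymm' : ∀ i j, L j i = L i j := fun i j => congrFun (congrFun hLsymm i) j
  have hLcsymm : Lcᴴ = Lc := by
    ext i j
    simp only [hLc, Matrix.conjTranspose_apply, Matrix.map_apply, hf,
      Complex.coe_algebraMap, Complex.star_def, Complex.conj_ofReal]
    rw [hLsymm' i j]
  have hUcH : Ucᴴ = (U₁ᵀ).map f := by
    ext i j
    simp [hUc, Matrix.conjTranspose_apply, Matrix.map_apply, Matrix.transpose_apply, hf]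
  -- block structure of mapped A
  have hMblocks : A.map (algebraMap ℝ ℂ) =
      Matrix.fromBlocks (-(1 + Lc)) (-(Lc * Uc)) (Ucᴴ * Lc) 0 := by
    rw [hA]
    ext (i | i) (j | j) <;>
      simp [Matrix.fromBlocks, Matrix.map_apply, Matrix.mul_apply, Matrix.one_apply,
        hLc, hUc, hUcH, Matrix.conjTranspose_apply, hf, apply_ite (algebraMap ℝ ℂ)] <;>
      (try split_ifs <;> simp)
  obtain ⟨v, hv0, hv⟩ := exists_eigvec _ hμ
  set x : Fin n → ℂ := fun i => v (Sum.inl i) with hx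
  set y : Fin (n - 1) → ℂ := fun j => v (Sum.inr j) with hy
  have hvelim : v = Sum.elim x y := by funext p; cases p <;> rfl
  rw [hMblocks, hvelim, Matrix.fromBlocks_mulVec] at hv
  have eq1 : (-(1 + Lc)) *ᵥ x + (-(Lc * Uc)) *ᵥ y = μ • x := by
    funext i
    have := congrFun hv (Sum.inl i)
    simpa using this
  have eq2 : (Ucᴴ * Lc) *ᵥ x = μ • y := by
    funext j
    have := congrFun hv (Sum.inr j)
    simpa using this
  -- norms
  set a : ℝ := ∑ i, Complex.normSq (x i) with ha
  set b : ℝ := ∑ j, Complex.normSq (y j) with hb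
  have hxa : star x ⬝ᵥ x = (a : ℂ) := dot_self_eq _ x
  have hyb : star y ⬝ᵥ y = (b : ℂ) := dot_self_eq _ y
  have ha0 : 0 ≤ a := sum_normSq_nonneg x
  have hb0 : 0 ≤ b := sum_normSq_nonneg y
  -- the quadratic form of L is nonnegative real
  have hpsd : L.PosSemidef := by rw [hL]; exact SimpleGraph.posSemidef_lapMatrix ℝ G
  obtain ⟨q, hq0, hqeq⟩ : ∃ q : ℝ, 0 ≤ q ∧ star x ⬝ᵥ (Lc *ᵥ x) = (q : ℂ) := by
    set S : Matrix (Fin n) (Fin n) ℝ := (open scoped MatrixOrder in CFC.sqrt L) with hS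
    have hSsymm : Sᵀ = S := by
      rw [← Matrix.conjTranspose_eq_transpose_of_trivial]
      exact (open scoped MatrixOrder in (CFC.sqrt_nonneg L).posSemidef.1)
    have hSsymm' : ∀ i j, S j i = S i j := fun i j => congrFun (congrFun hSsymm i) j
    set Sc : Matrix (Fin n) (Fin n) ℂ := S.map f with hSc
    have hScH : Scᴴ = Sc := by
      ext i j
      simp only [hSc, Matrix.conjTranspose_apply, Matrix.map_apply, hf,
        Complex.coe_algebraMap, Complex.star_def, Complex.conj_ofReal]
      rw [hSsymm' i j]
    have hLSS : Lc = Sc * Sc := by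
      rw [hLc, hSc, ← Matrix.map_mul, (open scoped MatrixOrder in CFC.sqrt_mul_sqrt_self L hpsd.nonneg)]
    set z : Fin n → ℂ := Sc *ᵥ x with hz
    refine ⟨∑ i, Complex.normSq (z i), sum_normSq_nonneg z, ?_⟩
    calc star x ⬝ᵥ (Lc *ᵥ x) = star x ⬝ᵥ (Sc *ᵥ z) := by
          rw [hz, Matrix.mulVec_mulVec, hLSS]
      _ = star (star z ⬝ᵥ (Scᴴ *ᵥ x)) := star_dot_mulVec _ _ _
      _ = star (star z ⬝ᵥ z) := by rw [hScH, hz]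
      _ = _ := by rw [dot_self_eq _ z, Complex.star_def, Complex.conj_ofReal]
  -- the cross term
  have hc : star x ⬝ᵥ ((Lc * Uc) *ᵥ y) = (starRingEnd ℂ) μ * (b : ℂ) := by
    rw [star_dot_mulVec]
    have hct : (Lc * Uc)ᴴ = Ucᴴ * Lc := by rw [Matrix.conjTranspose_mul, hLcsymm]
    rw [hct, eq2]
    have : star y ⬝ᵥ (μ • y) = μ * (b : ℂ) := by
      rw [dotProduct_smul, hyb, smul_eq_mul]
    rw [this, Complex.star_def, RingHom.map_mul, Complex.conj_ofReal]
  -- dot eq1 with star x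
  have key : (-((a : ℂ) + (q : ℂ))) + (-((starRingEnd ℂ) μ * (b : ℂ))) = μ * (a : ℂ) := by
    have h1 := congrArg (fun w => star x ⬝ᵥ w) eq1
    simp only [dotProduct_add] at h1
    have e1 : star x ⬝ᵥ ((-(1 + Lc)) *ᵥ x) = -((a : ℂ) + (q : ℂ)) := by
      rw [Matrix.neg_mulVec, dotProduct_neg, Matrix.add_mulVec, Matrix.one_mulVec,
        dotProduct_add, hxa, hqeq]
    have e2 : star x ⬝ᵥ ((-(Lc * Uc)) *ᵥ y) = -((starRingEnd ℂ) μ * (b : ℂ)) := by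
      rw [Matrix.neg_mulVec, dotProduct_neg, hc]
    have e3 : star x ⬝ᵥ (μ • x) = μ * (a : ℂ) := by
      rw [dotProduct_smul, hxa, smul_eq_mul]
    rw [e1, e2, e3] at h1
    exact h1
  -- take real parts
  have hre : μ.re * (a + b) = -(a + q) := by
    have h2 := congrArg Complex.re key
    simp only [Complex.add_re, Complex.neg_re, Complex.mul_re, Complex.ofReal_re,
      Complex.ofReal_im, Complex.conj_re, Complex.conj_im, mul_zero, zero_mul,
      sub_zero, neg_zero, add_zero] at h2
    linarith
  -- suppose μ.re ≥ 0
  by_contra hcon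
  push_neg at hcon
  have habpos : 0 < a + b := by
    rcases Function.ne_iff.mp hv0 with ⟨p, hp⟩
    cases p with
    | inl i =>
      have hxne : x ≠ 0 := fun h => hp (congrFun h i)
      have hane : a ≠ 0 := fun h0 => hxne (sum_normSq_eq_zero (by rw [← ha]; exact h0))
      have : 0 < a := lt_of_le_of_ne ha0 (Ne.symm hane)
      linarith
    | inr j =>
      have hyne : y ≠ 0 := fun h => hp (congrFun h j)
      have hbne : b ≠ 0 := fun h0 => hyne (sum_normSq_eq_zero (by rw [← hb]; exact h0))
      have : 0 < b := lt_of_le_of_ne hb0 (Ne.symm hbne)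
      linarith
  have hmab : 0 ≤ μ.re * (a + b) := mul_nonneg hcon habpos.le
  have haz : a = 0 := by linarith
  have hx0 : x = 0 := sum_normSq_eq_zero (by rw [← ha]; exact haz)
  have hbpos : 0 < b := by linarith
  -- x = 0 forces (Lc * Uc) *ᵥ y = 0
  have hLUy : (Lc * Uc) *ᵥ y = 0 := by
    rw [hx0] at eq1
    simp only [Matrix.mulVec_zero, smul_zero, Matrix.neg_mulVec, zero_add,
      neg_eq_zero] at eq1
    exact eq1
  set w : Fin n → ℂ := Uc *ᵥ y with hw
  have hLw : Lc *ᵥ w = 0 := by rw [hw, Matrix.mulVec_mulVec]; exact hLUy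
  -- real and imaginary parts lie in the kernel of L
  have hker : ∀ g : ℂ → ℝ, (∀ z₁ z₂ : ℂ, g (z₁ + z₂) = g z₁ + g z₂) →
      (∀ (r : ℝ) (z : ℂ), g ((r : ℂ) * z) = r * g z) →
      G.lapMatrix ℝ *ᵥ (fun i => g (w i)) = 0 := by
    intro g hadd hmul
    funext i
    have h4 : (Lc *ᵥ w) i = ∑ j, (L i j : ℂ) * w j := by
      simp [Matrix.mulVec, dotProduct, hLc, Matrix.map_apply, hf]
    have h3 : ∑ j, (L i j : ℂ) * w j = 0 := by
      have h := congrFun hLw i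
      rw [h4] at h
      simpa using h
    have h5 : g (∑ j, (L i j : ℂ) * w j) = ∑ j, L i j * g (w j) := by
      rw [show g (∑ j, (L i j : ℂ) * w j) = ∑ j, g ((L i j : ℂ) * w j) from
        map_sum (AddMonoidHom.mk' g hadd) _ _]
      exact Finset.sum_congr rfl fun j _ => hmul _ _
    have h6 : g (0 : ℂ) = 0 := by
      have := hmul 0 0; simpa using this
    have h7 : ∑ j, L i j * g (w j) = 0 := by rw [← h5, h3, h6]
    simpa [Matrix.mulVec, dotProduct, hL] using h7
  have hwr := hker Complex.re (fun _ _ => Complex.add_re _ _)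
    (fun r z => by simp [Complex.mul_re])
  have hwi := hker Complex.im (fun _ _ => Complex.add_im _ _)
    (fun r z => by simp [Complex.mul_im])
  have hreach : ∀ i j : Fin n, G.Reachable i j := hconn.preconnected
  have hconstw : ∀ i j : Fin n, w i = w j := by
    intro i j
    have hr := (G.lapMatrix_mulVec_eq_zero_iff_forall_reachable
      (x := fun i => (w i).re)).mp hwr i j (hreach i j)
    have hi := (G.lapMatrix_mulVec_eq_zero_iff_forall_reachable
      (x := fun i => (w i).im)).mp hwi i j (hreach i j)
    exact Complex.ext hr hi
  -- conclude y = 0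
  haveI : Nonempty (Fin n) := hconn.nonempty
  obtain ⟨i0⟩ := hconn.nonempty
  have hUU : Ucᴴ * Uc = 1 := by
    rw [hUcH, hUc, ← Matrix.map_mul, horth]
    exact Matrix.map_one f (map_zero f) (map_one f)
  have hyw : y = Ucᴴ *ᵥ w := by
    rw [hw, Matrix.mulVec_mulVec, hUU, Matrix.one_mulVec]
  have hwz : Ucᴴ *ᵥ w = 0 := by
    funext k
    have h8 : (Ucᴴ *ᵥ w) k = (∑ i, (U₁ᵀ k i : ℂ)) * w i0 := by
      simp only [Matrix.mulVec, dotProduct, hUcH, Matrix.map_apply, Finset.sum_mul, hf,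
        Complex.coe_algebraMap]
      exact Finset.sum_congr rfl fun i _ => by rw [hconstw i i0]
    have h9 : (∑ i, U₁ᵀ k i) = 0 := by
      have := congrFun hperp k
      simpa [Matrix.mulVec, dotProduct] using this
    rw [h8, ← Complex.ofReal_sum, h9]
    simp
  have hy0 : y = 0 := by rw [hyw, hwz]
  have : b = 0 := by rw [hb, hy0]; simp
  linarith
end

section
/- Let L be the Laplacian of an undirected connected graph on n vertices and u ∈ ℝⁿ a constant vector. Every solution (ξ(t), ζ(t)) of the linear system ξ̇ = -(I + L)ξ - Lζ + u, ζ̇ = Lξ with arbitrary initial conditions remains bounded, and ξ(t) converges exponentially to (1/n)(𝟙ₙᵀu)𝟙ₙ as t → ∞. -/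
open Matrix Filter


lemma dacc_dot_nn {n : ℕ} (v : Fin n → ℝ) : 0 ≤ v ⬝ᵥ v :=
  Finset.sum_nonneg fun _ _ => mul_self_nonneg _

lemma dacc_young {n : ℕ} (v w : Fin n → ℝ) {t : ℝ} (ht : 0 < t) :
    2 * (v ⬝ᵥ w) ≤ t * (v ⬝ᵥ v) + (w ⬝ᵥ w) / t := by
  have h0 : 0 ≤ (t • v - w) ⬝ᵥ (t • v - w) := dacc_dot_nn _
  have hexp : (t • v - w) ⬝ᵥ (t • v - w)
      = t^2 * (v ⬝ᵥ v) - 2*t*(v ⬝ᵥ w) + w ⬝ᵥ w := by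
    simp [sub_dotProduct, dotProduct_sub, smul_dotProduct,
      dotProduct_smul, dotProduct_comm w v, smul_eq_mul]
    ring
  rw [hexp] at h0
  rw [← sub_nonneg]
  have key : t * (v ⬝ᵥ v) + (w ⬝ᵥ w) / t - 2 * (v ⬝ᵥ w)
      = (t ^ 2 * (v ⬝ᵥ v) - 2 * t * (v ⬝ᵥ w) + w ⬝ᵥ w) / t := by
    field_simp
    ring
  rw [key]
  exact div_nonneg h0 ht.le

lemma dacc_mulVec_sq {n : ℕ} (L : Matrix (Fin n) (Fin n) ℝ) (v : Fin n → ℝ) :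
    (L *ᵥ v) ⬝ᵥ (L *ᵥ v) ≤ (∑ i, ∑ j, (L i j)^2) * (v ⬝ᵥ v) := by
  have key : ∀ i, (L *ᵥ v) i * (L *ᵥ v) i ≤ (∑ j, (L i j)^2) * (v ⬝ᵥ v) := by
    intro i
    have := Finset.sum_mul_sq_le_sq_mul_sq Finset.univ (fun j => L i j) v
    have h1 : (L *ᵥ v) i = ∑ j, L i j * v j := rfl
    have h2 : v ⬝ᵥ v = ∑ j, (v j)^2 := by simp [dotProduct, sq]
    rw [h1, h2]
    nlinarith [this]
  calc (L *ᵥ v) ⬝ᵥ (L *ᵥ v) = ∑ i, (L *ᵥ v) i * (L *ᵥ v) i := rfl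
    _ ≤ ∑ i, (∑ j, (L i j)^2) * (v ⬝ᵥ v) := Finset.sum_le_sum fun i _ => key i
    _ = (∑ i, ∑ j, (L i j)^2) * (v ⬝ᵥ v) := by rw [Finset.sum_mul]

lemma dacc_norm_le_sqrt {n : ℕ} (v : Fin n → ℝ) : ‖v‖ ≤ Real.sqrt (v ⬝ᵥ v) := by
  rw [pi_norm_le_iff_of_nonneg (Real.sqrt_nonneg _)]
  intro i
  rw [Real.norm_eq_abs, ← Real.sqrt_sq_eq_abs]
  apply Real.sqrt_le_sqrt
  have h1 : (v i)^2 = v i * v i := sq (v i)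
  rw [h1]
  exact Finset.single_le_sum (f := fun j => v j * v j)
    (fun j _ => mul_self_nonneg _) (Finset.mem_univ i)

lemma dacc_dot_deriv {n : ℕ} (f g : ℝ → Fin n → ℝ) (f' g' : Fin n → ℝ) (t : ℝ)
    (hf : ∀ i, HasDerivAt (fun s => f s i) (f' i) t)
    (hg : ∀ i, HasDerivAt (fun s => g s i) (g' i) t) :
    HasDerivAt (fun s => f s ⬝ᵥ g s) (f' ⬝ᵥ g t + f t ⬝ᵥ g') t := by
  have h : HasDerivAt (fun s => ∑ i, f s i * g s i)
      (∑ i, (f' i * g t i + f t i * g' i)) t :=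
    HasDerivAt.fun_sum fun i _ => (hf i).mul (hg i)
  simpa [dotProduct, Finset.sum_add_distrib] using h

-- PSD of laplacian in dot product form
lemma dacc_psd {n : ℕ} (G : SimpleGraph (Fin n)) [DecidableRel G.Adj] (v : Fin n → ℝ) :
    0 ≤ v ⬝ᵥ (G.lapMatrix ℝ *ᵥ v) := by
  have := (SimpleGraph.posSemidef_lapMatrix ℝ G).dotProduct_mulVec_nonneg v
  simpa using this

-- quadratic form zero implies constant (for connected graphs)
lemma dacc_qf_zero {n : ℕ} (G : SimpleGraph (Fin n)) [DecidableRel G.Adj]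
    (hconn : G.Connected) (v : Fin n → ℝ) (h : v ⬝ᵥ (G.lapMatrix ℝ *ᵥ v) = 0) :
    ∀ i j, v i = v j := by
  intro i j
  have h2 : Matrix.toLinearMap₂' ℝ (G.lapMatrix ℝ) v v = 0 := by
    rw [Matrix.toLinearMap₂'_apply']; exact h
  exact (SimpleGraph.lapMatrix_toLinearMap₂'_apply'_eq_zero_iff_forall_reachable G v).mp h2
    i j (hconn.preconnected i j)

-- spectral gap
lemma dacc_gap {n : ℕ} (hn : 0 < n) (G : SimpleGraph (Fin n)) [DecidableRel G.Adj]
    (hconn : G.Connected) :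
    ∃ μ : ℝ, 0 < μ ∧ ∀ z : Fin n → ℝ, (∑ i, z i) = 0 →
      μ * (z ⬝ᵥ z) ≤ z ⬝ᵥ (G.lapMatrix ℝ *ᵥ z) := by
  set S : Set (Fin n → ℝ) := {z | (∑ i, z i) = 0 ∧ z ⬝ᵥ z = 1} with hS
  -- normalization: any sum-zero z with positive norm-sq scales into S
  have hnorm : ∀ z : Fin n → ℝ, (∑ i, z i) = 0 → 0 < z ⬝ᵥ z →
      ((Real.sqrt (z ⬝ᵥ z))⁻¹ • z) ∈ S := by
    intro z hz hq
    have hs : Real.sqrt (z ⬝ᵥ z) > 0 := Real.sqrt_pos.mpr hq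
    constructor
    · simp [← Finset.mul_sum, hz]
    · have : ((Real.sqrt (z ⬝ᵥ z))⁻¹ • z) ⬝ᵥ ((Real.sqrt (z ⬝ᵥ z))⁻¹ • z)
          = ((Real.sqrt (z ⬝ᵥ z))⁻¹)^2 * (z ⬝ᵥ z) := by
        simp [smul_dotProduct, dotProduct_smul, smul_eq_mul]; ring
      rw [this, inv_pow, Real.sq_sqrt hq.le]
      exact inv_mul_cancel₀ (ne_of_gt hq)
  by_cases hne : S.Nonempty
  · -- compactness
    have hcont : Continuous fun z : Fin n → ℝ => z ⬝ᵥ (G.lapMatrix ℝ *ᵥ z) := by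
      apply continuous_finset_sum
      intro i _
      have : Continuous fun z : Fin n → ℝ => (G.lapMatrix ℝ *ᵥ z) i := by
        simp only [Matrix.mulVec, dotProduct]
        exact continuous_finset_sum _ fun j _ => continuous_const.mul (continuous_apply j)
      exact (continuous_apply i).mul this
    have hcont2 : Continuous fun z : Fin n → ℝ => z ⬝ᵥ z := by
      apply continuous_finset_sum
      intro i _
      exact (continuous_apply i).mul (continuous_apply i)
    have hclosed : IsClosed S := by
      apply IsClosed.inter
      · exact isClosed_eq (continuous_finset_sum _ fun i _ => continuous_apply i) continuous_const
      · exact isClosed_eq hcont2 continuous_const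
    have hbdd : Bornology.IsBounded S := by
      apply (Metric.isBounded_closedBall (x := (0 : Fin n → ℝ)) (r := 1)).subset
      intro z hz
      rw [Metric.mem_closedBall, dist_zero_right]
      rw [pi_norm_le_iff_of_nonneg zero_le_one]
      intro i
      rw [Real.norm_eq_abs, abs_le]
      have h1 : z i * z i ≤ 1 := by
        rw [← hz.2]
        exact Finset.single_le_sum (f := fun j => z j * z j)
          (fun j _ => mul_self_nonneg _) (Finset.mem_univ i)
      constructor <;> nlinarith
    have hcompact : IsCompact S := Metric.isCompact_iff_isClosed_bounded.mpr ⟨hclosed, hbdd⟩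
    obtain ⟨z0, hz0S, hz0min⟩ := hcompact.exists_isMinOn hne hcont.continuousOn
    refine ⟨z0 ⬝ᵥ (G.lapMatrix ℝ *ᵥ z0), ?_, ?_⟩
    · rcases lt_or_eq_of_le (dacc_psd G z0) with h | h
      · exact h
      · exfalso
        have hconst := dacc_qf_zero G hconn z0 h.symm
        have i0 : Fin n := ⟨0, hn⟩
        have hzeq : ∀ i, z0 i = z0 i0 := fun i => hconst i i0
        have hsum : ∑ i, z0 i = n * z0 i0 := by
          rw [Finset.sum_congr rfl fun i _ => hzeq i]
          simp [Finset.sum_const, mul_comm]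
        have hz00 : z0 i0 = 0 := by
          have := hz0S.1
          rw [hsum] at this
          have hn' : (n : ℝ) ≠ 0 := Nat.cast_ne_zero.mpr (Nat.pos_iff_ne_zero.mp hn)
          exact (mul_eq_zero.mp this).resolve_left hn'
        have : z0 ⬝ᵥ z0 = 0 := by
          have : ∀ i, z0 i = 0 := fun i => (hzeq i).trans hz00
          simp [dotProduct, this]
        rw [hz0S.2] at this
        exact one_ne_zero this
    · intro z hz
      rcases eq_or_lt_of_le (dacc_dot_nn z) with h | h
      · rw [← h, mul_zero]; exact dacc_psd G z
      · have hy := hnorm z hz h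
        have hmin := hz0min hy
        simp only [Set.mem_setOf_eq] at hmin
        set c := (Real.sqrt (z ⬝ᵥ z))⁻¹ with hc
        have hcsq : c^2 = (z ⬝ᵥ z)⁻¹ := by
          rw [hc, inv_pow, Real.sq_sqrt h.le]
        have hval : (c • z) ⬝ᵥ (G.lapMatrix ℝ *ᵥ (c • z))
            = c^2 * (z ⬝ᵥ (G.lapMatrix ℝ *ᵥ z)) := by
          rw [Matrix.mulVec_smul, smul_dotProduct, dotProduct_smul]
          simp [smul_eq_mul]; ring
        rw [hval, hcsq] at hmin
        calc (z0 ⬝ᵥ (G.lapMatrix ℝ *ᵥ z0)) * (z ⬝ᵥ z)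
            ≤ ((z ⬝ᵥ z)⁻¹ * (z ⬝ᵥ (G.lapMatrix ℝ *ᵥ z))) * (z ⬝ᵥ z) :=
              mul_le_mul_of_nonneg_right hmin (dacc_dot_nn z)
          _ = z ⬝ᵥ (G.lapMatrix ℝ *ᵥ z) := by
              field_simp
  · refine ⟨1, one_pos, fun z hz => ?_⟩
    rcases eq_or_lt_of_le (dacc_dot_nn z) with h | h
    · rw [← h, mul_zero]; exact dacc_psd G z
    · exact absurd ⟨_, hnorm z hz h⟩ hne

-- column sums of laplacian are zero
lemma dacc_colsum {n : ℕ} (G : SimpleGraph (Fin n)) [DecidableRel G.Adj] (v : Fin n → ℝ) :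
    ∑ i, (G.lapMatrix ℝ *ᵥ v) i = 0 := by
  have hsym := SimpleGraph.isSymm_lapMatrix G (R := ℝ)
  have hrow : ∀ j, ∑ i, G.lapMatrix ℝ j i = 0 := by
    intro j
    have := congrFun (SimpleGraph.lapMatrix_mulVec_const_eq_zero (R := ℝ) (G := G)) j
    simpa [Matrix.mulVec, dotProduct] using this
  calc ∑ i, (G.lapMatrix ℝ *ᵥ v) i = ∑ i, ∑ j, G.lapMatrix ℝ i j * v j := rfl
    _ = ∑ j, (∑ i, G.lapMatrix ℝ i j) * v j := by
        rw [Finset.sum_comm]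
        simp [Finset.sum_mul]
    _ = 0 := by
        apply Finset.sum_eq_zero
        intro j _
        have : ∑ i, G.lapMatrix ℝ i j = ∑ i, G.lapMatrix ℝ j i := by
          apply Finset.sum_congr rfl
          intro i _
          exact (hsym.apply i j).symm ▸ rfl
        rw [this, hrow j, zero_mul]

-- symmetry of dot products with L
lemma dacc_symm_dot {n : ℕ} (G : SimpleGraph (Fin n)) [DecidableRel G.Adj] (v w : Fin n → ℝ) :
    v ⬝ᵥ (G.lapMatrix ℝ *ᵥ w) = w ⬝ᵥ (G.lapMatrix ℝ *ᵥ v) := by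
  have hsym := SimpleGraph.isSymm_lapMatrix G (R := ℝ)
  rw [Matrix.dotProduct_mulVec, dotProduct_comm]
  congr 1
  rw [← Matrix.mulVec_transpose, hsym.eq]

-- surjectivity onto mean-zero vectors
lemma dacc_surj {n : ℕ} (hn : 0 < n) (G : SimpleGraph (Fin n)) [DecidableRel G.Adj]
    (hconn : G.Connected) (p : Fin n → ℝ) (hp : ∑ i, p i = 0) :
    ∃ y, G.lapMatrix ℝ *ᵥ y = p := by
  set T : (Fin n → ℝ) →ₗ[ℝ] (Fin n → ℝ) := Matrix.mulVecLin (G.lapMatrix ℝ) with hT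
  set σ : (Fin n → ℝ) →ₗ[ℝ] ℝ := ∑ i, LinearMap.proj i with hσ
  have hσ_apply : ∀ v : Fin n → ℝ, σ v = ∑ i, v i := by
    intro v; simp [hσ, LinearMap.sum_apply]
  have hn' : (n : ℝ) ≠ 0 := Nat.cast_ne_zero.mpr (Nat.pos_iff_ne_zero.mp hn)
  have i0 : Fin n := ⟨0, hn⟩
  have hone_ne : (fun _ => (1:ℝ)) ≠ (0 : Fin n → ℝ) := by
    intro h
    have := congrFun h i0
    simp at this
  have hker : LinearMap.ker T = Submodule.span ℝ {(fun _ => (1:ℝ) : Fin n → ℝ)} := by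
    apply le_antisymm
    · intro v hv
      rw [LinearMap.mem_ker, hT, Matrix.mulVecLin_apply] at hv
      have hv' : Matrix.toLin' (G.lapMatrix ℝ) v = 0 := by
        rw [Matrix.toLin'_apply]; exact hv
      have hconst := (SimpleGraph.lapMatrix_mulVec_eq_zero_iff_forall_reachable (G := G)).mp (by rwa [Matrix.toLin'_apply] at hv')
      rw [Submodule.mem_span_singleton]
      refine ⟨v i0, funext fun j => ?_⟩
      simpa using (hconst i0 j (hconn.preconnected i0 j))
    · rw [Submodule.span_le, Set.singleton_subset_iff]
      rw [SetLike.mem_coe, LinearMap.mem_ker, hT, Matrix.mulVecLin_apply]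
      exact SimpleGraph.lapMatrix_mulVec_const_eq_zero (R := ℝ) (G := G)
  have hrange_le : LinearMap.range T ≤ LinearMap.ker σ := by
    rintro _ ⟨v, rfl⟩
    rw [LinearMap.mem_ker, hσ_apply, hT, Matrix.mulVecLin_apply]
    exact dacc_colsum G v
  have hσ_surj : Function.Surjective σ := by
    intro c
    refine ⟨fun _ => c / n, ?_⟩
    rw [hσ_apply]
    simp [Finset.sum_const]
    field_simp
  have hfr_tot : Module.finrank ℝ (Fin n → ℝ) = n := by simp
  have hfr_ker : Module.finrank ℝ (LinearMap.ker T) = 1 := by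
    rw [hker, finrank_span_singleton hone_ne]
  have hfr_range : Module.finrank ℝ (LinearMap.range T) + 1 = n := by
    have := LinearMap.finrank_range_add_finrank_ker T
    rw [hfr_ker, hfr_tot] at this
    exact this
  have hfr_kerσ : Module.finrank ℝ (LinearMap.ker σ) + 1 = n := by
    have h1 := LinearMap.finrank_range_add_finrank_ker σ
    have h2 : LinearMap.range σ = ⊤ := LinearMap.range_eq_top.mpr hσ_surj
    rw [h2, hfr_tot] at h1
    simpa [add_comm] using h1
  have heq : LinearMap.range T = LinearMap.ker σ := by
    apply Submodule.eq_of_le_of_finrank_eq hrange_le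
    omega
  have hpmem : p ∈ LinearMap.ker σ := by
    rw [LinearMap.mem_ker, hσ_apply]; exact hp
  rw [← heq] at hpmem
  obtain ⟨y, hy⟩ := hpmem
  exact ⟨y, by rw [← hy, hT, Matrix.mulVecLin_apply]⟩

lemma dacc_decay (V V' : ℝ → ℝ) (α : ℝ) (hd : ∀ t, HasDerivAt V (V' t) t)
    (hle : ∀ t, V' t + α * V t ≤ 0) :
    ∀ t, 0 ≤ t → V t ≤ V 0 * Real.exp (-α * t) := by
  set g : ℝ → ℝ := fun t => V t * Real.exp (α * t) with hg
  have hgd : ∀ t, HasDerivAt g ((V' t + α * V t) * Real.exp (α * t)) t := by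
    intro t
    have he : HasDerivAt (fun t : ℝ => Real.exp (α * t)) (Real.exp (α * t) * α) t := by
      simpa using ((hasDerivAt_id t).const_mul α).exp
    have := (hd t).fun_mul he
    refine this.congr_deriv ?_
    ring
  have hanti : Antitone g := by
    apply antitone_of_deriv_nonpos
    · exact fun t => (hgd t).differentiableAt
    · intro t
      rw [(hgd t).deriv]
      exact mul_nonpos_of_nonpos_of_nonneg (hle t) (Real.exp_pos _).le
  intro t ht
  have h1 : g t ≤ g 0 := hanti ht
  rw [hg] at h1
  simp only [mul_zero, Real.exp_zero, mul_one] at h1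
  calc V t = V t * Real.exp (α * t) * Real.exp (-α * t) := by
        rw [mul_assoc, ← Real.exp_add]; ring_nf; simp
    _ ≤ V 0 * Real.exp (-α * t) := by
        apply mul_le_mul_of_nonneg_right h1 (Real.exp_pos _).le

lemma dacc_const (f : ℝ → ℝ) (f' : ℝ → ℝ) (hd : ∀ t, HasDerivAt f (f' t) t)
    (hz : ∀ t, f' t = 0) : ∀ t, f t = f 0 := by
  intro t
  exact is_const_of_deriv_eq_zero (fun s => (hd s).differentiableAt)
    (fun s => by rw [(hd s).deriv]; exact hz s) t 0
set_option maxHeartbeats 1000000 in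

lemma dacc_ineq (μ κ ε β α a r w0 e1 e2 e3 b : ℝ)
    (hμ : 0 < μ) (hκ0 : 0 ≤ κ)
    (hε0 : 0 < ε) (hε1 : ε ≤ 1) (hεκ : ε * (2 + 2*κ) ≤ μ)
    (hβ0 : 0 < β) (hβ1 : β ≤ 1) (hβ2 : β ≤ ε * μ / 2)
    (hα : α = 2/3 * β)
    (f1 : 0 ≤ e1) (f2 : μ * r ≤ e3) (f5 : b ≤ κ * a)
    (f6 : 0 ≤ a) (f7 : 0 ≤ r)
    (hy1 : 2 * (-w0) ≤ (4/μ) * a + r / (4/μ))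
    (hy2 : 2 * (-e2) ≤ (4/μ) * b + r / (4/μ))
    (hy3 : 2 * w0 ≤ 1 * a + r / 1) :
    (-2*a - 2*e1 + ε * (-w0 - e2 - e3 + e1)) + α * (a + r + ε * w0) ≤ 0 := by
  have hrdiv : r / (4/μ) = μ * r / 4 := by field_simp
  rw [hrdiv] at hy1 hy2
  -- step bounds
  have hb2 : 2 * (-e2) ≤ (4/μ) * (κ*a) + μ * r / 4 := by
    have h2μ : (0:ℝ) ≤ 4/μ := by positivity
    nlinarith [mul_le_mul_of_nonneg_left f5 h2μ]
  have hg1 : ε * (2 * (-w0)) ≤ ε * ((4/μ) * a + μ * r / 4) :=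
    mul_le_mul_of_nonneg_left hy1 hε0.le
  have hg2 : ε * (2 * (-e2)) ≤ ε * ((4/μ) * (κ*a) + μ * r / 4) :=
    mul_le_mul_of_nonneg_left hb2 hε0.le
  have hg3 : ε * (-e3) ≤ ε * (-(μ*r)) := by nlinarith [mul_le_mul_of_nonneg_left f2 hε0.le]
  have hg4 : ε * e1 ≤ 2 * e1 := by nlinarith
  have haux : ε * ((4/μ) * a + (4/μ) * (κ*a)) ≤ 2 * a := by
    have hexp : ε * ((4/μ) * a + (4/μ) * (κ*a)) = (ε * (2 + 2*κ)) * (2 * a / μ) := by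
      field_simp; ring
    rw [hexp]
    have haμ : 0 ≤ 2 * a / μ := by positivity
    calc (ε * (2 + 2*κ)) * (2 * a / μ) ≤ μ * (2 * a / μ) :=
          mul_le_mul_of_nonneg_right hεκ haμ
      _ = 2 * a := by field_simp
  have h5 : -2*a - 2*e1 + ε * (-w0 - e2 - e3 + e1) ≤ -a - (3/4)*(ε*μ)*r := by
    nlinarith [hg1, hg2, hg3, hg4, haux, f1]
  have hεw : ε * w0 ≤ (a + r)/2 := by
    nlinarith [hy3, hε0, hε1, f6, f7]
  have hαV : α * (a + r + ε * w0) ≤ β * (a + r) := by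
    have h1 : a + r + ε * w0 ≤ (3/2) * (a + r) := by linarith
    calc α * (a + r + ε * w0) ≤ α * ((3/2) * (a+r)) := by
          apply mul_le_mul_of_nonneg_left h1 (by rw [hα]; positivity)
      _ = β * (a + r) := by rw [hα]; ring
  have hβar : β * (a + r) ≤ a + (ε*μ/2)*r := by
    have h1 : β * a ≤ 1 * a := mul_le_mul_of_nonneg_right hβ1 f6
    have h2 : β * r ≤ (ε*μ/2) * r := mul_le_mul_of_nonneg_right hβ2 f7
    rw [mul_add]
    linarith
  have hfin : 0 ≤ ε*μ*r := by positivity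
  linarith [h5, hαV, hβar]
set_option maxHeartbeats 1000000 in
theorem dynamic_average_consensus_convergence (n : ℕ) (hn : 0 < n)
    (G : SimpleGraph (Fin n)) [DecidableRel G.Adj]
    (hconn : G.Connected)
    (L : Matrix (Fin n) (Fin n) ℝ) (hL : L = G.lapMatrix ℝ)
    (u : Fin n → ℝ)
    (ξ ζ : ℝ → (Fin n → ℝ))
    (hξ : ∀ t, HasDerivAt ξ (-(ξ t) - L.mulVec (ξ t) - L.mulVec (ζ t) + u) t)
    (hζ : ∀ t, HasDerivAt ζ (L.mulVec (ξ t)) t) :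
    (∃ M : ℝ, ∀ t ≥ (0 : ℝ), ‖ξ t‖ ≤ M ∧ ‖ζ t‖ ≤ M) ∧
    (∃ C α : ℝ, 0 < α ∧ ∀ t ≥ (0 : ℝ),
      ‖ξ t - (fun _ => (∑ i, u i) / n)‖ ≤ C * Real.exp (-α * t)) := by
  subst hL
  obtain ⟨μ, hμ, hgap⟩ := dacc_gap hn G hconn
  set κ : ℝ := ∑ i, ∑ j, (G.lapMatrix ℝ i j)^2 with hκ
  have hκ0 : 0 ≤ κ :=
    Finset.sum_nonneg fun i _ => Finset.sum_nonneg fun j _ => sq_nonneg _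
  have hn' : (n : ℝ) ≠ 0 := Nat.cast_ne_zero.mpr (Nat.pos_iff_ne_zero.mp hn)
  set s : Fin n → ℝ := fun _ => (∑ i, u i) / n with hs
  set p : Fin n → ℝ := fun i => u i - s i with hp
  have hpsum : ∑ i, p i = 0 := by
    simp only [hp, hs, Finset.sum_sub_distrib, Finset.sum_const, Finset.card_univ,
      Fintype.card_fin, nsmul_eq_mul]
    field_simp
    ring
  obtain ⟨y0, hy0⟩ := dacc_surj hn G hconn p hpsum
  set Sz : ℝ → ℝ := fun t => ∑ i, ζ t i with hSzdef
  have hSzd : ∀ t, HasDerivAt Sz (∑ i, (G.lapMatrix ℝ *ᵥ ξ t) i) t := fun t =>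
    HasDerivAt.fun_sum fun i _ => (hasDerivAt_pi.mp (hζ t)) i
  have hSzconst : ∀ t, Sz t = Sz 0 :=
    dacc_const Sz _ hSzd fun t => dacc_colsum G (ξ t)
  set m : ℝ := (Sz 0 - ∑ i, y0 i) / n with hm
  set zc : Fin n → ℝ := fun i => y0 i + m with hzc
  set x : ℝ → Fin n → ℝ := fun t => ξ t - s with hxdef
  set z : ℝ → Fin n → ℝ := fun t => ζ t - zc with hzdef
  have hLs : G.lapMatrix ℝ *ᵥ s = 0 := by
    have e : s = ((∑ i, u i) / n) • (fun _ => (1:ℝ)) := by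
      funext i; simp [hs, smul_eq_mul]
    rw [e, Matrix.mulVec_smul, SimpleGraph.lapMatrix_mulVec_const_eq_zero, smul_zero]
  have hLzc : G.lapMatrix ℝ *ᵥ zc = p := by
    have e : zc = y0 + m • (fun _ => (1:ℝ)) := by
      funext i; simp [hzc, smul_eq_mul]
    rw [e, Matrix.mulVec_add, Matrix.mulVec_smul,
      SimpleGraph.lapMatrix_mulVec_const_eq_zero, smul_zero, add_zero, hy0]
  have hsumz : ∀ t, ∑ i, z t i = 0 := by
    intro t
    have e : ∑ i, z t i = Sz t - (∑ i, y0 i) - n * m := by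
      simp only [hzdef, Pi.sub_apply, hzc, Finset.sum_sub_distrib, Finset.sum_add_distrib,
        Finset.sum_const, Finset.card_univ, Fintype.card_fin, nsmul_eq_mul, hSzdef]
      ring
    rw [e, hSzconst t, hm]
    field_simp
    ring
  have he1 : ∀ t, G.lapMatrix ℝ *ᵥ (x t) = G.lapMatrix ℝ *ᵥ ξ t := by
    intro t
    have e : x t = ξ t - s := rfl
    rw [e, Matrix.mulVec_sub, hLs, sub_zero]
  have he2 : ∀ t, G.lapMatrix ℝ *ᵥ (z t) = G.lapMatrix ℝ *ᵥ ζ t - p := by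
    intro t
    have e : z t = ζ t - zc := rfl
    rw [e, Matrix.mulVec_sub, hLzc]
  set F : ℝ → Fin n → ℝ :=
    fun t => -(x t) - G.lapMatrix ℝ *ᵥ x t - G.lapMatrix ℝ *ᵥ z t with hF
  have hFeq : ∀ t, -(ξ t) - G.lapMatrix ℝ *ᵥ (ξ t) - G.lapMatrix ℝ *ᵥ (ζ t) + u = F t := by
    intro t
    have h1 : G.lapMatrix ℝ *ᵥ ξ t = G.lapMatrix ℝ *ᵥ x t := (he1 t).symm
    have h2 : G.lapMatrix ℝ *ᵥ ζ t = G.lapMatrix ℝ *ᵥ z t + p := by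
      rw [he2 t]; abel
    rw [h1, h2]
    funext i
    show -(ξ t i) - (G.lapMatrix ℝ *ᵥ x t) i - ((G.lapMatrix ℝ *ᵥ z t) i + p i) + u i
      = -(x t i) - (G.lapMatrix ℝ *ᵥ x t) i - (G.lapMatrix ℝ *ᵥ z t) i
    have e1 : x t i = ξ t i - s i := rfl
    have e2 : p i = u i - s i := rfl
    rw [e1, e2]
    ring
  have hxd : ∀ t i, HasDerivAt (fun r => x r i) (F t i) t := by
    intro t i
    have h := (hasDerivAt_pi.mp (hξ t)) i
    rw [hFeq t] at h
    exact h.sub_const (s i)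
  have hzd : ∀ t i, HasDerivAt (fun r => z r i) ((G.lapMatrix ℝ *ᵥ x t) i) t := by
    intro t i
    have h := (hasDerivAt_pi.mp (hζ t)) i
    rw [← he1 t] at h
    exact h.sub_const (zc i)
  set ε : ℝ := min 1 (μ / (2 + 2*κ)) with hεdef
  have hε0 : 0 < ε := lt_min one_pos (div_pos hμ (by linarith))
  have hε1 : ε ≤ 1 := min_le_left _ _
  have hεκ : ε * (2 + 2*κ) ≤ μ := by
    have h := min_le_right 1 (μ / (2 + 2*κ))
    have h2 : (0:ℝ) < 2 + 2*κ := by linarith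
    calc ε * (2 + 2*κ) ≤ (μ / (2 + 2*κ)) * (2 + 2*κ) :=
          mul_le_mul_of_nonneg_right h h2.le
      _ = μ := by field_simp
  set β : ℝ := min 1 (ε * μ / 2) with hβdef
  have hβ0 : 0 < β := lt_min one_pos (by positivity)
  have hβ1 : β ≤ 1 := min_le_left _ _
  have hβ2 : β ≤ ε * μ / 2 := min_le_right _ _
  set α : ℝ := (2/3) * β with hαdef
  have hα0 : 0 < α := by positivity
  set Vf : ℝ → ℝ := fun t => x t ⬝ᵥ x t + z t ⬝ᵥ z t + ε * (x t ⬝ᵥ z t) with hVf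
  set Vd : ℝ → ℝ := fun t =>
    (F t ⬝ᵥ x t + x t ⬝ᵥ F t) +
    ((G.lapMatrix ℝ *ᵥ x t) ⬝ᵥ z t + z t ⬝ᵥ (G.lapMatrix ℝ *ᵥ x t)) +
    ε * (F t ⬝ᵥ z t + x t ⬝ᵥ (G.lapMatrix ℝ *ᵥ x t)) with hVd
  have hVderiv : ∀ t, HasDerivAt Vf (Vd t) t := by
    intro t
    exact ((dacc_dot_deriv x x (F t) (F t) t (hxd t) (hxd t)).add
      (dacc_dot_deriv z z _ _ t (hzd t) (hzd t))).add
      ((dacc_dot_deriv x z (F t) _ t (hxd t) (hzd t)).const_mul ε)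
  have hkey : ∀ t, Vd t + α * Vf t ≤ 0 := by
    intro t
    have c1 : (G.lapMatrix ℝ *ᵥ x t) ⬝ᵥ x t = x t ⬝ᵥ (G.lapMatrix ℝ *ᵥ x t) :=
      dotProduct_comm _ _
    have c2 : (G.lapMatrix ℝ *ᵥ z t) ⬝ᵥ x t = (G.lapMatrix ℝ *ᵥ x t) ⬝ᵥ z t := by
      calc (G.lapMatrix ℝ *ᵥ z t) ⬝ᵥ x t
          = x t ⬝ᵥ (G.lapMatrix ℝ *ᵥ z t) := dotProduct_comm _ _
        _ = z t ⬝ᵥ (G.lapMatrix ℝ *ᵥ x t) := dacc_symm_dot G _ _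
        _ = (G.lapMatrix ℝ *ᵥ x t) ⬝ᵥ z t := dotProduct_comm _ _
    have c3 : z t ⬝ᵥ (G.lapMatrix ℝ *ᵥ x t) = (G.lapMatrix ℝ *ᵥ x t) ⬝ᵥ z t :=
      dotProduct_comm _ _
    have c4 : (G.lapMatrix ℝ *ᵥ z t) ⬝ᵥ z t = z t ⬝ᵥ (G.lapMatrix ℝ *ᵥ z t) :=
      dotProduct_comm _ _
    have c5 : x t ⬝ᵥ F t = F t ⬝ᵥ x t := dotProduct_comm _ _
    have hFdot : ∀ v : Fin n → ℝ, F t ⬝ᵥ v =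
        -(x t ⬝ᵥ v) - (G.lapMatrix ℝ *ᵥ x t) ⬝ᵥ v - (G.lapMatrix ℝ *ᵥ z t) ⬝ᵥ v := by
      intro v
      show (-(x t) - G.lapMatrix ℝ *ᵥ x t - G.lapMatrix ℝ *ᵥ z t) ⬝ᵥ v = _
      rw [sub_dotProduct, sub_dotProduct, neg_dotProduct]
    have hVdeq : Vd t + α * Vf t =
        (-2*(x t ⬝ᵥ x t) - 2*(x t ⬝ᵥ (G.lapMatrix ℝ *ᵥ x t))
          + ε * (-(x t ⬝ᵥ z t) - ((G.lapMatrix ℝ *ᵥ x t) ⬝ᵥ z t)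
            - (z t ⬝ᵥ (G.lapMatrix ℝ *ᵥ z t)) + (x t ⬝ᵥ (G.lapMatrix ℝ *ᵥ x t))))
        + α * ((x t ⬝ᵥ x t) + (z t ⬝ᵥ z t) + ε * (x t ⬝ᵥ z t)) := by
      show ((F t ⬝ᵥ x t + x t ⬝ᵥ F t) +
        ((G.lapMatrix ℝ *ᵥ x t) ⬝ᵥ z t + z t ⬝ᵥ (G.lapMatrix ℝ *ᵥ x t)) +
        ε * (F t ⬝ᵥ z t + x t ⬝ᵥ (G.lapMatrix ℝ *ᵥ x t))) +
        α * (x t ⬝ᵥ x t + z t ⬝ᵥ z t + ε * (x t ⬝ᵥ z t)) = _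
      rw [c5, hFdot (x t), hFdot (z t), c1, c2, c3, c4]
      ring
    rw [hVdeq]
    have hμ4 : (0:ℝ) < 4/μ := by positivity
    have hy1' : 2 * (-(x t ⬝ᵥ z t)) ≤
        (4/μ) * (x t ⬝ᵥ x t) + (z t ⬝ᵥ z t) / (4/μ) := by
      have h := dacc_young (-(x t)) (z t) hμ4
      simp only [neg_dotProduct, dotProduct_neg, neg_neg] at h
      exact h
    have hy2' : 2 * (-((G.lapMatrix ℝ *ᵥ x t) ⬝ᵥ z t)) ≤
        (4/μ) * ((G.lapMatrix ℝ *ᵥ x t) ⬝ᵥ (G.lapMatrix ℝ *ᵥ x t))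
          + (z t ⬝ᵥ z t) / (4/μ) := by
      have h := dacc_young (-(G.lapMatrix ℝ *ᵥ x t)) (z t) hμ4
      simp only [neg_dotProduct, dotProduct_neg, neg_neg] at h
      exact h
    have hy3' : 2 * (x t ⬝ᵥ z t) ≤ 1 * (x t ⬝ᵥ x t) + (z t ⬝ᵥ z t) / 1 :=
      dacc_young (x t) (z t) one_pos
    have f5 : (G.lapMatrix ℝ *ᵥ x t) ⬝ᵥ (G.lapMatrix ℝ *ᵥ x t) ≤ κ * (x t ⬝ᵥ x t) := by
      have h := dacc_mulVec_sq (G.lapMatrix ℝ) (x t)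
      rw [← hκ] at h
      exact h
    exact dacc_ineq μ κ ε β α (x t ⬝ᵥ x t) (z t ⬝ᵥ z t) (x t ⬝ᵥ z t)
      (x t ⬝ᵥ (G.lapMatrix ℝ *ᵥ x t)) ((G.lapMatrix ℝ *ᵥ x t) ⬝ᵥ z t)
      (z t ⬝ᵥ (G.lapMatrix ℝ *ᵥ z t)) ((G.lapMatrix ℝ *ᵥ x t) ⬝ᵥ (G.lapMatrix ℝ *ᵥ x t))
      hμ hκ0 hε0 hε1 hεκ hβ0 hβ1 hβ2 hαdef
      (dacc_psd G (x t)) (hgap (z t) (hsumz t)) f5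
      (dacc_dot_nn _) (dacc_dot_nn _) hy1' hy2' hy3'
  have hdecay := dacc_decay Vf Vd α hVderiv hkey
  have hVf_lb : ∀ t, (x t ⬝ᵥ x t + z t ⬝ᵥ z t)/2 ≤ Vf t := by
    intro t
    have hVfeq : Vf t = x t ⬝ᵥ x t + z t ⬝ᵥ z t + ε * (x t ⬝ᵥ z t) := rfl
    have hy3 : 2*(-(x t ⬝ᵥ z t)) ≤ 1 * (x t ⬝ᵥ x t) + (z t ⬝ᵥ z t) / 1 := by
      have h := dacc_young (-(x t)) (z t) one_pos
      simp only [neg_dotProduct, dotProduct_neg, neg_neg] at h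
      exact h
    have f6 : 0 ≤ x t ⬝ᵥ x t := dacc_dot_nn _
    have f7 : 0 ≤ z t ⬝ᵥ z t := dacc_dot_nn _
    rw [hVfeq]
    nlinarith [hε0, hε1, hy3]
  have hξeq : ∀ t, ξ t = x t + s := by
    intro t; funext i
    have e : x t i = ξ t i - s i := rfl
    simp [e]
  have hζeq : ∀ t, ζ t = z t + zc := by
    intro t; funext i
    have e : z t i = ζ t i - zc i := rfl
    simp [e]
  have hxs : ∀ t, ξ t - s = x t := fun t => rfl
  clear_value Vf Vd x z s zc
  have hV0 : 0 ≤ Vf 0 := by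
    have h := hVf_lb 0
    have f6 : 0 ≤ x 0 ⬝ᵥ x 0 := dacc_dot_nn _
    have f7 : 0 ≤ z 0 ⬝ᵥ z 0 := dacc_dot_nn _
    linarith
  have hxnorm : ∀ t, 0 ≤ t → ‖x t‖ ≤ Real.sqrt (2 * Vf 0) * Real.exp (-(α/2) * t) := by
    intro t ht
    have h1 : ‖x t‖ ≤ Real.sqrt (x t ⬝ᵥ x t) := dacc_norm_le_sqrt _
    have h2 : x t ⬝ᵥ x t ≤ 2 * Vf t := by
      have h := hVf_lb t
      have f7 : 0 ≤ z t ⬝ᵥ z t := dacc_dot_nn _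
      linarith
    have h3 : Vf t ≤ Vf 0 * Real.exp (-α * t) := hdecay t ht
    calc ‖x t‖ ≤ Real.sqrt (x t ⬝ᵥ x t) := h1
      _ ≤ Real.sqrt (2 * Vf 0 * Real.exp (-α * t)) := by
          apply Real.sqrt_le_sqrt; linarith
      _ = Real.sqrt (2 * Vf 0) * Real.sqrt (Real.exp (-α * t)) := by
          rw [Real.sqrt_mul (by linarith)]
      _ = Real.sqrt (2 * Vf 0) * Real.exp (-(α/2) * t) := by
          congr 1
          rw [← Real.exp_half]
          congr 1
          ring
  have hznorm : ∀ t, 0 ≤ t → ‖z t‖ ≤ Real.sqrt (2 * Vf 0) := by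
    intro t ht
    have h1 : ‖z t‖ ≤ Real.sqrt (z t ⬝ᵥ z t) := dacc_norm_le_sqrt _
    have h2 : z t ⬝ᵥ z t ≤ 2 * Vf t := by
      have h := hVf_lb t
      have f6 : 0 ≤ x t ⬝ᵥ x t := dacc_dot_nn _
      linarith
    have h3 : Vf t ≤ Vf 0 * Real.exp (-α * t) := hdecay t ht
    have hexp1 : Real.exp (-α * t) ≤ 1 := by
      rw [Real.exp_le_one_iff]
      have : 0 ≤ α * t := mul_nonneg hα0.le ht
      linarith
    have h4 : Vf 0 * Real.exp (-α * t) ≤ Vf 0 * 1 :=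
      mul_le_mul_of_nonneg_left hexp1 hV0
    have h5 : z t ⬝ᵥ z t ≤ 2 * Vf 0 := by linarith
    calc ‖z t‖ ≤ Real.sqrt (z t ⬝ᵥ z t) := h1
      _ ≤ Real.sqrt (2 * Vf 0) := Real.sqrt_le_sqrt h5
  constructor
  · refine ⟨Real.sqrt (2 * Vf 0) + ‖s‖ + ‖zc‖, fun t ht => ?_⟩
    have hxb : ‖x t‖ ≤ Real.sqrt (2 * Vf 0) := by
      have h := hxnorm t ht
      have hexp1 : Real.exp (-(α/2) * t) ≤ 1 := by
        rw [Real.exp_le_one_iff]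
        have : 0 ≤ (α/2) * t := mul_nonneg (by positivity) ht
        linarith
      calc ‖x t‖ ≤ Real.sqrt (2 * Vf 0) * Real.exp (-(α/2) * t) := h
        _ ≤ Real.sqrt (2 * Vf 0) * 1 :=
            mul_le_mul_of_nonneg_left hexp1 (Real.sqrt_nonneg _)
        _ = Real.sqrt (2 * Vf 0) := mul_one _
    constructor
    · calc ‖ξ t‖ = ‖x t + s‖ := by rw [hξeq t]
        _ ≤ ‖x t‖ + ‖s‖ := norm_add_le _ _
        _ ≤ Real.sqrt (2 * Vf 0) + ‖s‖ + ‖zc‖ := by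
            have := norm_nonneg zc; linarith
    · calc ‖ζ t‖ = ‖z t + zc‖ := by rw [hζeq t]
        _ ≤ ‖z t‖ + ‖zc‖ := norm_add_le _ _
        _ ≤ Real.sqrt (2 * Vf 0) + ‖s‖ + ‖zc‖ := by
            have h := hznorm t ht
            have := norm_nonneg s
            linarith
  · refine ⟨Real.sqrt (2 * Vf 0), α/2, by positivity, fun t ht => ?_⟩
    rw [hxs t]
    exact hxnorm t ht
end
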